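/- If X has the Log-Lindley density f(x;θ,λ) = θ²/(1+λθ)·(λ − log x)·x^(θ−1) on (0,1), then E[(−log X)^p] = Γ(1+p)·(1+p+λθ) / (θ^p·(1+λθ)) for p ≥ 0. -/

import Mathlib

open Real MeasureTheory

/-- The Log-Lindley density. -/
noncomputable def ll (θ lam x : ℝ) : ℝ :=
  θ ^ 2 / (1 + lam * θ) * (lam - Real.log x) * x ^ (θ - 1)

lemma ll_integrable_aux {a r : ℝ} (ha : 0 < a) (hr : 0 < r) :
    MeasureTheory.IntegrableOn (fun t : ℝ => t ^ (a - 1) * Real.exp (-(r * t)))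
      (Set.Ioi 0) := by
  have h := Real.GammaIntegral_convergent ha
  have h2 : MeasureTheory.IntegrableOn
      (fun t : ℝ => Real.exp (-(r * t)) * (r * t) ^ (a - 1)) (Set.Ioi 0) := by
    have := (MeasureTheory.integrableOn_Ioi_comp_mul_left_iff
      (fun x : ℝ => Real.exp (-x) * x ^ (a - 1)) 0 hr).mpr (by simpa using h)
    simpa using this
  have h3 : MeasureTheory.IntegrableOn
      (fun t : ℝ => (r ^ (a - 1))⁻¹ * (Real.exp (-(r * t)) * (r * t) ^ (a - 1)))
      (Set.Ioi 0) := h2.const_mul _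
  refine MeasureTheory.IntegrableOn.congr_fun h3 (fun t ht => ?_) measurableSet_Ioi
  have htpos : (0:ℝ) < t := ht
  rw [Real.mul_rpow hr.le htpos.le]
  field_simp [(Real.rpow_pos_of_pos hr (a-1)).ne']

theorem ll_neg_log_moment (θ lam p : ℝ) (hθ : 0 < θ) (hlam : 0 ≤ lam) (hp : 0 ≤ p) :
    ∫ x in Set.Ioo (0:ℝ) 1, (-Real.log x) ^ p * ll θ lam x =
      Real.Gamma (1 + p) * (1 + p + lam * θ) / (θ ^ p * (1 + lam * θ)) := by
  have hden : (0:ℝ) < 1 + lam * θ := by positivity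
  have himg : (fun t : ℝ => Real.exp (-t)) '' Set.Ioi 0 = Set.Ioo (0:ℝ) 1 := by
    ext x
    constructor
    · rintro ⟨t, ht, rfl⟩
      have : (0:ℝ) < t := ht
      exact ⟨Real.exp_pos _, by
        rw [show (1:ℝ) = Real.exp 0 by simp]
        exact Real.exp_lt_exp.mpr (by linarith)⟩
    · rintro ⟨hx0, hx1⟩
      refine ⟨-Real.log x, ?_, by simp [Real.exp_log hx0]⟩
      simp only [Set.mem_Ioi]
      have := Real.log_neg hx0 hx1
      linarith
  have hderiv : ∀ t ∈ Set.Ioi (0:ℝ),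
      HasDerivWithinAt (fun t : ℝ => Real.exp (-t)) (-Real.exp (-t)) (Set.Ioi 0) t := by
    intro t _
    have h := ((Real.hasDerivAt_exp (-t)).comp t (hasDerivAt_neg t))
    simpa [mul_comm, Function.comp_def] using h.hasDerivWithinAt
  have hinj : Set.InjOn (fun t : ℝ => Real.exp (-t)) (Set.Ioi 0) := by
    intro a _ b _ h
    have := Real.exp_injective h
    linarith
  rw [← himg, MeasureTheory.integral_image_eq_integral_abs_deriv_smul measurableSet_Ioi
    hderiv hinj]
  have hcongr : ∀ t ∈ Set.Ioi (0:ℝ),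
      |-Real.exp (-t)| • ((-Real.log (Real.exp (-t))) ^ p * ll θ lam (Real.exp (-t))) =
      θ ^ 2 / (1 + lam * θ) *
        (lam * (t ^ p * Real.exp (-(θ * t))) + t ^ (p + 1) * Real.exp (-(θ * t))) := by
    intro t ht
    have htpos : (0:ℝ) < t := ht
    have hlog : Real.log (Real.exp (-t)) = -t := Real.log_exp _
    have hrpow : Real.exp (-t) ^ (θ - 1) = Real.exp (-t * (θ - 1)) := by
      rw [Real.rpow_def_of_pos (Real.exp_pos _), hlog]
    have ht1 : t ^ (p + 1) = t ^ p * t := Real.rpow_add_one htpos.ne' p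
    simp only [smul_eq_mul, abs_neg, abs_of_pos (Real.exp_pos (-t)), ll, hlog, hrpow,
      neg_neg, sub_neg_eq_add, ht1]
    rw [show -(θ * t) = -t * (θ - 1) + -t by ring, Real.exp_add]
    ring
  rw [MeasureTheory.setIntegral_congr_fun measurableSet_Ioi hcongr]
  have hI1 : MeasureTheory.IntegrableOn (fun t : ℝ => t ^ p * Real.exp (-(θ * t)))
      (Set.Ioi 0) := by
    have := ll_integrable_aux (a := p + 1) (r := θ) (by linarith) hθ
    simpa using this
  have hI2 : MeasureTheory.IntegrableOn (fun t : ℝ => t ^ (p + 1) * Real.exp (-(θ * t)))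
      (Set.Ioi 0) := by
    have := ll_integrable_aux (a := p + 2) (r := θ) (by linarith) hθ
    simpa [show p + 2 - 1 = p + 1 by ring] using this
  rw [MeasureTheory.integral_const_mul, MeasureTheory.integral_add (hI1.const_mul lam) hI2,
    MeasureTheory.integral_const_mul]
  have e1 : ∫ t in Set.Ioi (0:ℝ), t ^ p * Real.exp (-(θ * t)) =
      (1 / θ) ^ (p + 1) * Real.Gamma (p + 1) := by
    have := Real.integral_rpow_mul_exp_neg_mul_Ioi (a := p + 1) (r := θ) (by linarith) hθ
    simpa using this
  have e2 : ∫ t in Set.Ioi (0:ℝ), t ^ (p + 1) * Real.exp (-(θ * t)) =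
      (1 / θ) ^ (p + 2) * Real.Gamma (p + 2) := by
    have := Real.integral_rpow_mul_exp_neg_mul_Ioi (a := p + 2) (r := θ) (by linarith) hθ
    simpa [show p + 2 - 1 = p + 1 by ring] using this
  rw [e1, e2]
  have hG2 : Real.Gamma (p + 2) = (p + 1) * Real.Gamma (p + 1) := by
    rw [show p + 2 = p + 1 + 1 by ring, Real.Gamma_add_one (by linarith)]
  have hG1 : Real.Gamma (1 + p) = Real.Gamma (p + 1) := by rw [add_comm]
  have hr1 : (1 / θ) ^ (p + 1) = 1 / (θ ^ p * θ) := by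
    rw [Real.div_rpow zero_le_one hθ.le, Real.one_rpow, Real.rpow_add_one hθ.ne']
  have hr2 : (1 / θ) ^ (p + 2) = 1 / (θ ^ p * θ * θ) := by
    rw [Real.div_rpow zero_le_one hθ.le, Real.one_rpow, show p + 2 = p + 1 + 1 by ring,
      Real.rpow_add_one hθ.ne', Real.rpow_add_one hθ.ne']
  rw [hG2, hG1, hr1, hr2]
  have hθp : (0:ℝ) < θ ^ p := Real.rpow_pos_of_pos hθ p
  field_simp
  ring
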